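/- Suppose π(λ) is an integrable nonnegative function on ℝ, and suppose the symmetric-model marginal ∫_{(0,∞)} ∫_ℝ ∏_{j=1}^n (1/σ) f((y_j-μ)/σ) · (1/σ) dμ dσ is finite for the data y_1,…,y_n. Then the marginal likelihood of the skew-symmetric model with prior π_I(μ,σ,λ) ∝ σ^{-1} π(λ), namely ∫_ℝ ∫_{(0,∞)} ∫_ℝ ∏_{j=1}^n [(2/σ) f((y_j-μ)/σ) G(λ(y_j-μ)/σ)] · σ^{-1} π(λ) dμ dσ dλ, is finite; hence the posterior of (μ,σ,λ) is proper. -/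
import Mathlib


open MeasureTheory Set
open scoped ENNReal

/-- if π is integrable and the symmetric-model marginal is
finite, then the marginal likelihood of the skew-symmetric model with the
independence-Jeffreys-type prior σ⁻¹ π(λ) is finite (the posterior is proper). -/
theorem posterior_propriety_skew_symmetric
    (f G π : ℝ → ℝ) (n : ℕ) (y : Fin n → ℝ)
    (hf_meas : Measurable f) (hf_nonneg : ∀ x, 0 ≤ f x) (hf_int : ∫ x, f x = 1)
    (hG_meas : Measurable G) (hG01 : ∀ t, G t ∈ Icc (0:ℝ) 1)
    (hπ_meas : Measurable π) (hπ_nonneg : ∀ lam, 0 ≤ π lam)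
    (hπ_int : ∫⁻ lam, ENNReal.ofReal (π lam) < ⊤)
    (hsym_marginal :
      (∫⁻ σ in Ioi (0:ℝ), ∫⁻ μ : ℝ,
          (∏ j, ENNReal.ofReal ((1/σ) * f ((y j - μ)/σ))) * ENNReal.ofReal (1/σ))
        < ⊤) :
    (∫⁻ lam : ℝ, ∫⁻ σ in Ioi (0:ℝ), ∫⁻ μ : ℝ,
        (∏ j, ENNReal.ofReal ((2/σ) * f ((y j - μ)/σ) * G (lam * ((y j - μ)/σ))))
          * ENNReal.ofReal ((1/σ) * π lam))
      < ⊤ := by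
  set M := (∫⁻ σ in Ioi (0:ℝ), ∫⁻ μ : ℝ,
          (∏ j, ENNReal.ofReal ((1/σ) * f ((y j - μ)/σ))) * ENNReal.ofReal (1/σ)) with hM
  have hMne : M ≠ ⊤ := hsym_marginal.ne
  have key : ∀ lam : ℝ,
      (∫⁻ σ in Ioi (0:ℝ), ∫⁻ μ : ℝ,
        (∏ j, ENNReal.ofReal ((2/σ) * f ((y j - μ)/σ) * G (lam * ((y j - μ)/σ))))
          * ENNReal.ofReal ((1/σ) * π lam))
      ≤ ((2:ℝ≥0∞)^n * ENNReal.ofReal (π lam)) * M := by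
    intro lam
    have hcne : (2:ℝ≥0∞)^n * ENNReal.ofReal (π lam) ≠ ⊤ :=
      ENNReal.mul_ne_top (by simp) ENNReal.ofReal_ne_top
    rw [hM, ← lintegral_const_mul' _ _ hcne]
    refine setLIntegral_mono' measurableSet_Ioi fun σ hσ => ?_
    rw [← lintegral_const_mul' _ _ hcne]
    refine lintegral_mono fun μ => ?_
    have hσ0 : (0:ℝ) < σ := hσ
    have h1 : ∀ j : Fin n,
        ENNReal.ofReal ((2/σ) * f ((y j - μ)/σ) * G (lam * ((y j - μ)/σ)))
        ≤ 2 * ENNReal.ofReal ((1/σ) * f ((y j - μ)/σ)) := by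
      intro j
      rw [← ENNReal.ofReal_ofNat 2, ← ENNReal.ofReal_mul (by norm_num)]
      apply ENNReal.ofReal_le_ofReal
      have hfj := hf_nonneg ((y j - μ)/σ)
      have hG := hG01 (lam * ((y j - μ)/σ))
      calc (2/σ) * f ((y j - μ)/σ) * G (lam * ((y j - μ)/σ))
          ≤ (2/σ) * f ((y j - μ)/σ) * 1 := by
            apply mul_le_mul_of_nonneg_left hG.2
            positivity
        _ = 2 * ((1/σ) * f ((y j - μ)/σ)) := by ring
    calc (∏ j, ENNReal.ofReal ((2/σ) * f ((y j - μ)/σ) * G (lam * ((y j - μ)/σ))))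
          * ENNReal.ofReal ((1/σ) * π lam)
        ≤ (∏ j, 2 * ENNReal.ofReal ((1/σ) * f ((y j - μ)/σ)))
          * (ENNReal.ofReal (1/σ) * ENNReal.ofReal (π lam)) := by
          gcongr with j
          · exact h1 j
          · rw [← ENNReal.ofReal_mul (by positivity)]
      _ = ((2:ℝ≥0∞)^n * ENNReal.ofReal (π lam)) *
          ((∏ j, ENNReal.ofReal ((1/σ) * f ((y j - μ)/σ))) * ENNReal.ofReal (1/σ)) := by
          rw [Finset.prod_mul_distrib, Finset.prod_const, Finset.card_univ, Fintype.card_fin]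
          ring
  calc (∫⁻ lam : ℝ, ∫⁻ σ in Ioi (0:ℝ), ∫⁻ μ : ℝ,
        (∏ j, ENNReal.ofReal ((2/σ) * f ((y j - μ)/σ) * G (lam * ((y j - μ)/σ))))
          * ENNReal.ofReal ((1/σ) * π lam))
      ≤ ∫⁻ lam, ((2:ℝ≥0∞)^n * ENNReal.ofReal (π lam)) * M := lintegral_mono key
    _ = ((2:ℝ≥0∞)^n * M) * ∫⁻ lam, ENNReal.ofReal (π lam) := by
        rw [← lintegral_const_mul' _ _ (ENNReal.mul_ne_top (by simp) hMne)]
        congr 1 with lam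
        ring
    _ < ⊤ := ENNReal.mul_lt_top (ENNReal.mul_ne_top (by simp) hMne).lt_top hπ_int
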